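/- Let G be a digraph on n ≥ 2 vertices that is not strongly connected, i.e., there exist vertices u, v such that there is no directed walk in G from u to v. Then G does not require the nSSP: there exists a matrix A ∈ M(G) that does not have the nSSP. -/

import Mathlib

open Matrix

/-- `A` has the non-symmetric Strong Spectral Property (nSSP): the only matrix `X`
with `A ∘ X = O` (Hadamard product) and `A Xᵀ - Xᵀ A = O` is `X = O`. -/
def HasNSSP {V : Type*} [Fintype V] (A : Matrix V V ℝ) : Prop :=
  ∀ X : Matrix V V ℝ,
    (∀ i j, A i j * X i j = 0) → A * Xᵀ - Xᵀ * A = 0 → X = 0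

/-- `A ∈ M(G)`: the entry `A i j` is nonzero exactly when `(i,j)` is an arc of the digraph. -/
def MemPattern {V : Type*} (E : Set (V × V)) (A : Matrix V V ℝ) : Prop :=
  ∀ i j, A i j ≠ 0 ↔ (i, j) ∈ E

/-- The digraph with arc set `E` requires the nSSP. -/
def RequiresNSSP {V : Type*} [Fintype V] (E : Set (V × V)) : Prop :=
  ∀ A : Matrix V V ℝ, MemPattern E A → HasNSSP A

/-- The digraph with arc set `E` allows the nSSP. -/
def AllowsNSSP {V : Type*} [Fintype V] (E : Set (V × V)) : Prop :=
  ∃ A : Matrix V V ℝ, MemPattern E A ∧ HasNSSP A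

/-- Out-neighbourhood `N⁺_G[v]`. -/
def outNbhd {V : Type*} (E : Set (V × V)) (v : V) : Set V := {u | (v, u) ∈ E}

/-- In-neighbourhood `N⁻_G[v]`. -/
def inNbhd {V : Type*} (E : Set (V × V)) (v : V) : Set V := {w | (w, v) ∈ E}

/-- The double path `P_{n,L}` on `n` vertices (0-indexed by `Fin n`, so that the
vertex with 1-based label `ℓ` is `⟨ℓ-1, _⟩`), with loops exactly at vertices in `L`. -/
def doublePathE (n : ℕ) (L : Set (Fin n)) : Set (Fin n × Fin n) :=
  {q | q.1.val + 1 = q.2.val ∨ q.2.val + 1 = q.1.val ∨ (q.1 = q.2 ∧ q.1 ∈ L)}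


section NSSPAux
set_option linter.unusedSectionVars false
set_option maxHeartbeats 1000000

variable {V : Type*} [Fintype V] [DecidableEq V]

lemma nssp_witness (A Y : Matrix V V ℝ) (hY : Y ≠ 0)
    (hsupp : ∀ a b, Y a b ≠ 0 → A b a = 0) (hcomm : A * Y = Y * A) :
    ¬ HasNSSP A := by
  intro h
  apply hY
  rw [← Matrix.transpose_eq_zero]
  refine h Yᵀ (fun i j => ?_) ?_
  · by_cases hij : Y j i = 0
    · simp [Matrix.transpose_apply, hij]
    · simp [Matrix.transpose_apply, hsupp j i hij]
  · rw [Matrix.transpose_transpose, hcomm, sub_self]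

lemma pow_entry_walk (M : Matrix V V ℝ) (r : V → V → Prop)
    (hM : ∀ i j, M i j ≠ 0 → r i j) :
    ∀ (k : ℕ) (i j : V), (M ^ k) i j ≠ 0 →
      ∃ f : ℕ → V, f 0 = i ∧ f k = j ∧ ∀ m < k, r (f m) (f (m + 1)) := by
  intro k
  induction k with
  | zero =>
    intro i j h
    rw [pow_zero] at h
    have hij : i = j := by
      by_contra hne
      exact h (Matrix.one_apply_ne hne)
    subst hij
    exact ⟨fun _ => i, rfl, rfl, by omega⟩
  | succ k ih =>
    intro i j h
    rw [pow_succ, Matrix.mul_apply] at h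
    obtain ⟨c, -, hc⟩ := Finset.exists_ne_zero_of_sum_ne_zero h
    have h1 : (M ^ k) i c ≠ 0 := fun h0 => hc (by rw [h0, zero_mul])
    have h2 : M c j ≠ 0 := fun h0 => hc (by rw [h0, mul_zero])
    obtain ⟨f, hf0, hfk, hstep⟩ := ih i c h1
    refine ⟨fun m => if m = k + 1 then j else f m, by simp [hf0], by simp, ?_⟩
    intro m hm
    rcases Nat.lt_or_ge m k with h' | h'
    · have e1 : m ≠ k + 1 := by omega
      have e2 : m + 1 ≠ k + 1 := by omega
      simpa [e1, e2, show m ≠ k by omega] using hstep m h'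
    · have hmk : m = k := by omega
      subst hmk
      have e1 : m ≠ m + 1 := by omega
      simpa [e1, hfk] using hM c j h2

lemma transGen_of_chain (r : V → V → Prop) (f : ℕ → V) (k : ℕ)
    (hf : ∀ m < k, r (f m) (f (m + 1))) :
    ∀ b, b ≤ k → ∀ a, a < b → Relation.TransGen r (f a) (f b) := by
  intro b
  induction b with
  | zero => intro _ a ha; omega
  | succ b ih =>
    intro hbk a hab
    rcases Nat.lt_or_ge a b with h | h
    · exact (ih (by omega) a h).tail (hf b (by omega))
    · have : a = b := by omega
      subst this
      exact Relation.TransGen.single (hf a (by omega))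

lemma pow_card_eq_zero_of_acyclic (M : Matrix V V ℝ) (r : V → V → Prop)
    (hM : ∀ i j, M i j ≠ 0 → r i j) (hac : ∀ w, ¬ Relation.TransGen r w w) :
    M ^ (Fintype.card V) = 0 := by
  ext i j
  simp only [Matrix.zero_apply]
  by_contra h
  obtain ⟨f, -, -, hstep⟩ := pow_entry_walk M r hM (Fintype.card V) i j h
  obtain ⟨a, b, hab, heq⟩ := Fintype.exists_ne_map_eq_of_card_lt
    (fun m : Fin (Fintype.card V + 1) => f m.val) (by simp)
  rcases lt_or_gt_of_ne hab with h' | h'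
  · have := transGen_of_chain r f (Fintype.card V) hstep b.val (by omega) a.val h'
    rw [← heq] at this
    exact hac (f a.val) this
  · have := transGen_of_chain r f (Fintype.card V) hstep a.val (by omega) b.val h'
    rw [heq] at this
    exact hac (f b.val) this

lemma exists_last_iterate (M : Matrix V V ℝ) (c : ℕ) (hM : M ^ c = 0)
    (e : V → ℝ) (he : e ≠ 0) :
    ∃ k, (M ^ k) *ᵥ e ≠ 0 ∧ M *ᵥ ((M ^ k) *ᵥ e) = 0 := by
  have hex : ∃ k, (M ^ k) *ᵥ e = 0 := ⟨c, by rw [hM, Matrix.zero_mulVec]⟩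
  classical
  have hk0 : (M ^ Nat.find hex) *ᵥ e = 0 := Nat.find_spec hex
  have hpos : Nat.find hex ≠ 0 := by
    intro h0
    rw [h0, pow_zero, Matrix.one_mulVec] at hk0
    exact he hk0
  obtain ⟨k, hk⟩ : ∃ k, Nat.find hex = k + 1 := ⟨Nat.find hex - 1, by omega⟩
  refine ⟨k, Nat.find_min hex (by omega), ?_⟩
  rw [Matrix.mulVec_mulVec, ← pow_succ', ← hk]
  exact hk0

lemma witness_outer (A : Matrix V V ℝ) (s : V → Prop)
    (h0 : ∀ i j, s i → ¬ s j → A i j = 0) (t : ℝ) (x y : V → ℝ)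
    (hx : x ≠ 0) (hy : y ≠ 0) (hxs : ∀ i, x i ≠ 0 → ¬ s i) (hys : ∀ i, y i ≠ 0 → s i)
    (hAx : A *ᵥ x = t • x) (hyA : y ᵥ* A = t • y) : ¬ HasNSSP A := by
  obtain ⟨a, ha⟩ := Function.ne_iff.mp hx
  obtain ⟨b, hb⟩ := Function.ne_iff.mp hy
  simp only [Pi.zero_apply] at ha hb
  refine nssp_witness A (Matrix.of fun i j => x i * y j) ?_ ?_ ?_
  · intro h
    exact mul_ne_zero ha hb (by simpa using congrFun (congrFun h a) b)
  · intro i j hij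
    simp only [Matrix.of_apply] at hij
    rcases mul_ne_zero_iff.mp hij with ⟨h1, h2⟩
    exact h0 j i (hys j h2) (hxs i h1)
  · ext i j
    have h1 : (A *ᵥ x) i = t * x i := by rw [hAx]; simp
    have h2 : (y ᵥ* A) j = t * y j := by rw [hyA]; simp
    have e1 : (A *ᵥ x) i = ∑ c, A i c * x c := by
      simp [Matrix.mulVec, dotProduct]
    have e2 : (y ᵥ* A) j = ∑ c, y c * A c j := by
      simp [Matrix.vecMul, dotProduct]
    simp only [Matrix.mul_apply, Matrix.of_apply]
    calc ∑ c, A i c * (x c * y j) = (∑ c, A i c * x c) * y j := by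
           rw [Finset.sum_mul]; exact Finset.sum_congr rfl (fun c _ => by ring)
      _ = t * x i * y j := by rw [← e1, h1]
      _ = x i * ((y ᵥ* A) j) := by rw [h2]; ring
      _ = ∑ c, x i * y c * A c j := by
           rw [e2, Finset.mul_sum]; exact Finset.sum_congr rfl (fun c _ => by ring)


lemma witness_triangular (A : Matrix V V ℝ) (s : V → Prop)
    (h0 : ∀ i j, s i → ¬ s j → A i j = 0)
    (hac : ∀ w, ¬ Relation.TransGen (fun a b => A a b ≠ 0 ∧ ¬ s a ∧ ¬ s b) w w)
    (v0 : V) (hv0 : ¬ s v0) : ¬ HasNSSP A := by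
  classical
  set c := Fintype.card V with hcard
  set p : V → ℝ := fun i => if s i then 1 else 0 with hp
  set q : V → ℝ := fun i => if s i then 0 else 1 with hq
  set P : Matrix V V ℝ := Matrix.diagonal p with hP
  set Q : Matrix V V ℝ := Matrix.diagonal q with hQ
  set B : Matrix V V ℝ := P * A * P with hB
  set C : Matrix V V ℝ := Q * A * P with hC
  set D : Matrix V V ℝ := Q * A * Q with hD
  have hps : ∀ i, s i → p i = 1 := fun i hi => by rw [hp]; simp [hi]
  have hqs : ∀ i, s i → q i = 0 := fun i hi => by rw [hq]; simp [hi]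
  have hpn : ∀ i, ¬ s i → p i = 0 := fun i hi => by rw [hp]; simp [hi]
  have hqn : ∀ i, ¬ s i → q i = 1 := fun i hi => by rw [hq]; simp [hi]
  have hBa : ∀ i j, B i j = p i * A i j * p j := fun i j => by
    rw [hB, hP, Matrix.mul_diagonal, Matrix.diagonal_mul]
  have hCa : ∀ i j, C i j = q i * A i j * p j := fun i j => by
    rw [hC, hP, hQ, Matrix.mul_diagonal, Matrix.diagonal_mul]
  have hDa : ∀ i j, D i j = q i * A i j * q j := fun i j => by
    rw [hD, hQ, Matrix.mul_diagonal, Matrix.diagonal_mul]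
  have hPQ : P * Q = 0 := by
    rw [hP, hQ, Matrix.diagonal_mul_diagonal]
    ext i j
    rcases eq_or_ne i j with rfl | hij
    · by_cases hi : s i <;> simp [Matrix.diagonal_apply_eq, hp, hq, hi]
    · simp [Matrix.diagonal_apply_ne _ hij]
  have hQP : Q * P = 0 := by
    rw [hP, hQ, Matrix.diagonal_mul_diagonal]
    ext i j
    rcases eq_or_ne i j with rfl | hij
    · by_cases hi : s i <;> simp [Matrix.diagonal_apply_eq, hp, hq, hi]
    · simp [Matrix.diagonal_apply_ne _ hij]
  have hQQ : Q * Q = Q := by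
    rw [hQ, Matrix.diagonal_mul_diagonal]
    ext i j
    rcases eq_or_ne i j with rfl | hij
    · by_cases hi : s i <;> simp [Matrix.diagonal_apply_eq, hq, hi]
    · simp [Matrix.diagonal_apply_ne _ hij]
  have hPplusQ : P + Q = 1 := by
    rw [hP, hQ, Matrix.diagonal_add]
    ext i j
    rcases eq_or_ne i j with rfl | hij
    · by_cases hi : s i <;>
        simp [Matrix.diagonal_apply_eq, Matrix.one_apply_eq, hp, hq, hi]
    · simp [Matrix.diagonal_apply_ne _ hij, Matrix.one_apply_ne hij]
  have hPAQ : P * A * Q = 0 := by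
    ext i j
    rw [hP, hQ, Matrix.mul_diagonal, Matrix.diagonal_mul]
    by_cases hi : s i
    · by_cases hj : s j
      · simp [hqs j hj]
      · simp [h0 i j hi hj]
    · simp [hpn i hi]
  have hBC : B + C = A * P := by
    rw [hB, hC, ← add_mul, ← add_mul, hPplusQ, one_mul]
  have hAQ : A * Q = D := by
    calc A * Q = (P + Q) * (A * Q) := by rw [hPplusQ, one_mul]
    _ = P * A * Q + Q * A * Q := by rw [add_mul, Matrix.mul_assoc, Matrix.mul_assoc]
    _ = D := by rw [hPAQ, zero_add, hD]
  have hsplit : A = B + C + D := by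
    calc A = A * (P + Q) := by rw [hPplusQ, mul_one]
    _ = A * P + A * Q := mul_add _ _ _
    _ = B + C + D := by rw [← hBC, hAQ]
  -- nilpotency of D
  have hDnil : D ^ c = 0 := by
    rw [hcard]
    refine pow_card_eq_zero_of_acyclic D _ (fun i j h => ?_) hac
    rw [hDa] at h
    refine ⟨fun h' => h (by rw [h']; ring), fun hi => h (by rw [hqs i hi]; ring),
      fun hj => h (by rw [hqs j hj]; ring)⟩
  -- the kernel vector on the complement side
  have he : (Pi.single v0 1 : V → ℝ) ≠ 0 := by
    intro h
    have := congrFun h v0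
    simp at this
  obtain ⟨k, hxne, hxker⟩ := exists_last_iterate D c hDnil (Pi.single v0 (1:ℝ)) he
  set x : V → ℝ := (D ^ k) *ᵥ (Pi.single v0 (1:ℝ)) with hx
  have hxs : ∀ i, x i ≠ 0 → ¬ s i := by
    intro i hxi
    cases k with
    | zero =>
      rw [hx, pow_zero, Matrix.one_mulVec] at hxi
      by_cases hiv : i = v0
      · subst hiv; exact hv0
      · rw [Pi.single_eq_of_ne hiv] at hxi; exact absurd rfl hxi
    | succ m =>
      rw [hx, pow_succ', ← Matrix.mulVec_mulVec] at hxi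
      intro hsi
      apply hxi
      have : ∀ j, D i j * ((D ^ m *ᵥ Pi.single v0 1) j) = 0 := by
        intro j
        rw [hDa, hqs i hsi]; ring
      simp only [Matrix.mulVec, dotProduct]
      exact Finset.sum_eq_zero (fun j _ => this j)
  have hAx0 : A *ᵥ x = 0 := by
    rw [hsplit, Matrix.add_mulVec, Matrix.add_mulVec]
    have hBx : B *ᵥ x = 0 := by
      funext i
      simp only [Matrix.mulVec, dotProduct, Pi.zero_apply]
      refine Finset.sum_eq_zero (fun j _ => ?_)
      by_cases hj : x j = 0
      · rw [hj, mul_zero]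
      · beta_reduce; rw [hBa, hpn j (hxs j hj)]; ring
    have hCx : C *ᵥ x = 0 := by
      funext i
      simp only [Matrix.mulVec, dotProduct, Pi.zero_apply]
      refine Finset.sum_eq_zero (fun j _ => ?_)
      by_cases hj : x j = 0
      · rw [hj, mul_zero]
      · beta_reduce; rw [hCa, hpn j (hxs j hj)]; ring
    rw [hBx, hCx, hxker]
    simp
  by_cases hdet : (B + Q).det = 0
  · -- singular case: rank one witness with eigenvalue 0
    have hdet' : ((B + Q)ᵀ).det = 0 := by rw [Matrix.det_transpose]; exact hdet
    obtain ⟨y, hyne, hy⟩ := Matrix.exists_mulVec_eq_zero_iff.mpr hdet'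
    rw [Matrix.mulVec_transpose] at hy
    have hys : ∀ i, y i ≠ 0 → s i := by
      intro i hyi
      by_contra hsi
      apply hyi
      have h1 := congrFun hy i
      rw [Matrix.vecMul_add] at h1
      have h2 : (y ᵥ* B) i = 0 := by
        simp only [Matrix.vecMul, dotProduct]
        refine Finset.sum_eq_zero (fun j _ => ?_)
        beta_reduce; rw [hBa, hpn i hsi]; ring
      rw [Pi.add_apply, h2, zero_add, hQ, Matrix.vecMul_diagonal, hqn i hsi,
        mul_one] at h1
      exact h1
    have hyQ : y ᵥ* Q = 0 := by
      funext i
      rw [hQ, Matrix.vecMul_diagonal]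
      by_cases hi : s i
      · rw [hqs i hi, mul_zero]; rfl
      · by_cases hyi : y i = 0
        · rw [hyi, zero_mul]; rfl
        · exact absurd (hys i hyi) hi
    have hyB : y ᵥ* B = 0 := by
      have := hy
      rw [Matrix.vecMul_add, hyQ, add_zero] at this
      exact this
    have hyA : y ᵥ* A = 0 := by
      rw [hsplit, Matrix.vecMul_add, Matrix.vecMul_add, hyB]
      have hyC : y ᵥ* C = 0 := by
        funext j
        simp only [Matrix.vecMul, dotProduct, Pi.zero_apply]
        refine Finset.sum_eq_zero (fun i _ => ?_)
        by_cases hyi : y i = 0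
        · rw [hyi, zero_mul]
        · beta_reduce; rw [hCa, hqs i (hys i hyi)]; ring
      have hyD : y ᵥ* D = 0 := by
        funext j
        simp only [Matrix.vecMul, dotProduct, Pi.zero_apply]
        refine Finset.sum_eq_zero (fun i _ => ?_)
        by_cases hyi : y i = 0
        · rw [hyi, zero_mul]
        · beta_reduce; rw [hDa, hqs i (hys i hyi)]; ring
      rw [hyC, hyD]
      simp
    exact witness_outer A s h0 0 x y hxne hyne hxs hys
      (by rw [hAx0, zero_smul]) (by rw [hyA, zero_smul])
  · -- invertible case: Neumann series Sylvester solution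
    set B' := B + Q with hB'
    have hu : IsUnit B'.det := isUnit_iff_ne_zero.mpr hdet
    have hi1 : B' * B'⁻¹ = 1 := Matrix.mul_nonsing_inv _ hu
    have hi2 : B'⁻¹ * B' = 1 := Matrix.nonsing_inv_mul _ hu
    have hBQ : B * Q = 0 := by
      rw [hB, Matrix.mul_assoc, hPQ, mul_zero]
    have hCQ : C * Q = 0 := by
      rw [hC, Matrix.mul_assoc, hPQ, mul_zero]
    have hDQ : D * Q = D := by
      rw [hD, Matrix.mul_assoc, hQQ]
    have hQB : Q * B = 0 := by
      rw [hB, ← Matrix.mul_assoc, ← Matrix.mul_assoc, hQP, zero_mul, zero_mul]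
    have hQC : Q * C = C := by
      rw [hC, ← Matrix.mul_assoc, ← Matrix.mul_assoc, hQQ]
    have hQD : Q * D = D := by
      rw [hD, ← Matrix.mul_assoc, ← Matrix.mul_assoc, hQQ]
    have hB'Q : B' * Q = Q := by
      rw [hB', add_mul, hBQ, zero_add, hQQ]
    have hiQ : B'⁻¹ * Q = Q := by
      calc B'⁻¹ * Q = B'⁻¹ * (B' * Q) := by rw [hB'Q]
      _ = (B'⁻¹ * B') * Q := by rw [Matrix.mul_assoc]
      _ = Q := by rw [hi2, one_mul]
    have hipowQ : ∀ m : ℕ, (B'⁻¹) ^ (m + 1) * Q = Q := by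
      intro m
      induction m with
      | zero => rw [pow_one]; exact hiQ
      | succ m ih =>
        rw [pow_succ, Matrix.mul_assoc, hiQ]
        exact ih
    set W : Matrix V V ℝ := - ∑ k ∈ Finset.range c, D ^ k * C * (B'⁻¹) ^ (k + 1) with hW
    have hWQ : W * Q = 0 := by
      rw [hW, neg_mul, Finset.sum_mul, neg_eq_zero]
      refine Finset.sum_eq_zero (fun k _ => ?_)
      rw [Matrix.mul_assoc, hipowQ, Matrix.mul_assoc, hCQ, mul_zero]
    have hQDkC : ∀ m : ℕ, Q * (D ^ m * C) = D ^ m * C := by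
      intro m
      cases m with
      | zero => rw [pow_zero, one_mul, hQC]
      | succ m =>
        rw [pow_succ', Matrix.mul_assoc D, ← Matrix.mul_assoc Q, hQD]
    have hQW : Q * W = W := by
      rw [hW, mul_neg, Finset.mul_sum, neg_inj]
      refine Finset.sum_congr rfl (fun k _ => ?_)
      rw [← Matrix.mul_assoc, ← Matrix.mul_assoc]
      rw [Matrix.mul_assoc Q, hQDkC]
    have hBW : B * W = 0 := by
      rw [← hQW, ← Matrix.mul_assoc, hBQ, zero_mul]
    have hCW : C * W = 0 := by
      rw [← hQW, ← Matrix.mul_assoc, hCQ, zero_mul]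
    have hWC : W * C = 0 := by
      rw [← hQC, ← Matrix.mul_assoc, hWQ, zero_mul]
    have hWD : W * D = 0 := by
      rw [← hQD, ← Matrix.mul_assoc, hWQ, zero_mul]
    have key : D * W = W * B + C := by
      have hDW : D * W = - ∑ k ∈ Finset.range c, D ^ (k+1) * C * (B'⁻¹) ^ (k + 1) := by
        rw [hW, mul_neg, Finset.mul_sum, neg_inj]
        refine Finset.sum_congr rfl (fun k _ => ?_)
        rw [← Matrix.mul_assoc, ← Matrix.mul_assoc, ← pow_succ']
      have hWB : W * B = - ∑ k ∈ Finset.range c, D ^ k * C * (B'⁻¹) ^ k := by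
        have hBeq : B = B' - Q := by rw [hB']; abel
        rw [hBeq, mul_sub, hWQ, sub_zero, hW, neg_mul, Finset.sum_mul, neg_inj]
        refine Finset.sum_congr rfl (fun k _ => ?_)
        rw [Matrix.mul_assoc, pow_succ, Matrix.mul_assoc (B'⁻¹ ^ k), hi2, mul_one]
      have hg0 : D ^ 0 * C * (B'⁻¹) ^ 0 = C := by rw [pow_zero, pow_zero, one_mul, mul_one]
      have hgc : D ^ c * C * (B'⁻¹) ^ c = 0 := by rw [hDnil, zero_mul, zero_mul]
      have h1 := Finset.sum_range_succ' (fun k => D ^ k * C * (B'⁻¹) ^ k) c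
      have h2 := Finset.sum_range_succ (fun k => D ^ k * C * (B'⁻¹) ^ k) c
      rw [hg0] at h1
      rw [hgc, add_zero] at h2
      have h3 : (∑ k ∈ Finset.range c, D ^ (k+1) * C * (B'⁻¹) ^ (k + 1))
          = (∑ k ∈ Finset.range c, D ^ k * C * (B'⁻¹) ^ k) - C := by
        refine eq_sub_of_add_eq ?_
        rw [← h1, h2]
      rw [hDW, hWB, h3]
      abel
    have hAW : A * W = D * W := by
      rw [hsplit, add_mul, add_mul, hBW, hCW, zero_add, zero_add]
    have hAQ2 : (B + C + D) * Q = D := by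
      rw [add_mul, add_mul, hBQ, hCQ, hDQ, zero_add, zero_add]
    have hQA : Q * A = C + D := by
      rw [hsplit, mul_add, mul_add, hQB, hQC, hQD, zero_add]
    have hWA : W * A = W * B := by
      rw [hsplit, mul_add, mul_add, hWC, hWD, add_zero, add_zero]
    have hcomm : A * (W + Q) = (W + Q) * A := by
      rw [mul_add, add_mul, hAW, hWA, hQA]
      rw [hsplit, hAQ2]
      rw [key]
      abel
    have hWentry : ∀ a b, ¬ (¬ s a ∧ s b) → W a b = 0 := by
      intro a b hab
      by_cases hsa : s a
      · have := congrFun (congrFun hQW a) b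
        rw [Matrix.mul_apply] at this
        rw [← this]
        refine Finset.sum_eq_zero (fun k _ => ?_)
        rw [hQ, Matrix.diagonal_apply]
        by_cases hk : a = k
        · subst hk; simp [hqs a hsa]
        · simp [hk]
      · have hsb : ¬ s b := fun h => hab ⟨hsa, h⟩
        have := congrFun (congrFun hWQ a) b
        rw [Matrix.mul_apply, Matrix.zero_apply] at this
        have hsum : ∀ k, W a k * Q k b = if k = b then W a b else 0 := by
          intro k
          rw [hQ, Matrix.diagonal_apply]
          by_cases hk : k = b
          · subst hk; rw [hqn k hsb]; simp
          · simp [hk]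
        rw [Finset.sum_congr rfl (fun k _ => hsum k), Finset.sum_ite_eq' Finset.univ b] at this
        simpa using this
    refine nssp_witness A (W + Q) ?_ ?_ hcomm
    · intro h
      have hWv : W v0 v0 = 0 := hWentry v0 v0 (fun hh => hv0 hh.2)
      have h1 : W v0 v0 + Q v0 v0 = 0 := by
        have h2 := congrFun (congrFun h v0) v0
        simpa using h2
      rw [hWv, zero_add, hQ, Matrix.diagonal_apply_eq, hqn v0 hv0] at h1
      exact one_ne_zero h1
    · intro a b hab
      by_cases hsa : s a
      · exfalso
        apply hab
        rw [Matrix.add_apply, hWentry a b (fun hh => hh.1 hsa), zero_add, hQ]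
        rcases eq_or_ne a b with rfl | hne
        · rw [Matrix.diagonal_apply_eq, hqs a hsa]
        · rw [Matrix.diagonal_apply_ne _ hne]
      · by_cases hsb : s b
        · exact h0 b a hsb hsa
        · have hWab : W a b = 0 := hWentry a b (fun hh => hsb hh.2)
          rcases eq_or_ne a b with rfl | hne
          · by_contra hAaa
            exact hac a (Relation.TransGen.single ⟨hAaa, hsa, hsa⟩)
          · exfalso
            apply hab
            rw [Matrix.add_apply, hWab, zero_add, hQ, Matrix.diagonal_apply_ne _ hne]

lemma hasNSSP_of_transpose (A : Matrix V V ℝ) (h : HasNSSP Aᵀ) : HasNSSP A := by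
  intro X h1 h2
  have heq : A * Xᵀ = Xᵀ * A := sub_eq_zero.mp h2
  have h3 : Aᵀ * (Xᵀ)ᵀ - (Xᵀ)ᵀ * Aᵀ = 0 := by
    rw [Matrix.transpose_transpose, sub_eq_zero]
    have e1 : (Xᵀ * A)ᵀ = Aᵀ * X := by
      rw [Matrix.transpose_mul, Matrix.transpose_transpose]
    have e2 : (A * Xᵀ)ᵀ = X * Aᵀ := by
      rw [Matrix.transpose_mul, Matrix.transpose_transpose]
    rw [← e1, ← e2, heq]
  have h4 := h Xᵀ (fun i j => by
    rw [Matrix.transpose_apply, Matrix.transpose_apply]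
    exact h1 j i) h3
  rw [← Matrix.transpose_eq_zero]
  exact h4

lemma case_both_cycles (E : Set (V × V)) (s : V → Prop)
    (hclosed : ∀ i j, s i → (i,j) ∈ E → s j)
    (hcS : ∃ w, Relation.TransGen (fun a b => (a,b) ∈ E ∧ s a ∧ s b) w w)
    (hcT : ∃ w, Relation.TransGen (fun a b => (a,b) ∈ E ∧ ¬ s a ∧ ¬ s b) w w) :
    ∃ A : Matrix V V ℝ, (∀ i j, A i j ≠ 0 ↔ (i, j) ∈ E) ∧ ¬ HasNSSP A := by
  classical
  obtain ⟨w, hw⟩ := hcS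
  obtain ⟨w', hw'⟩ := hcT
  set U : V → Prop :=
    fun i => Relation.ReflTransGen (fun a b => (a,b) ∈ E ∧ s a ∧ s b) w i with hU
  set U' : V → Prop :=
    fun i => Relation.ReflTransGen (fun a b => (a,b) ∈ E ∧ ¬ s a ∧ ¬ s b) i w' with hU'
  have hsw : s w := by
    obtain ⟨b, hb, -⟩ := Relation.TransGen.head'_iff.mp hw
    exact hb.2.1
  have hsw' : ¬ s w' := by
    obtain ⟨b, hb, -⟩ := Relation.TransGen.head'_iff.mp hw'
    exact hb.2.1
  have hUs : ∀ i, U i → s i := by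
    intro i hi
    rcases Relation.ReflTransGen.cases_tail hi with h | ⟨c, -, hc⟩
    · rw [h]; exact hsw
    · exact hc.2.2
  have hU's : ∀ i, U' i → ¬ s i := by
    intro i hi
    rcases Relation.ReflTransGen.cases_head hi with h | ⟨c, hc, -⟩
    · rw [h]; exact hsw'
    · exact hc.2.1
  have hUw : U w := Relation.ReflTransGen.refl
  have hU'w' : U' w' := Relation.ReflTransGen.refl
  have hU_in : ∀ i, U i → ∃ a, U a ∧ (a, i) ∈ E := by
    intro i hi
    rcases Relation.ReflTransGen.cases_tail hi with h | ⟨c, hc, hci⟩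
    · obtain ⟨b, hb1, hb2⟩ := Relation.TransGen.tail'_iff.mp hw
      exact ⟨b, hb1, by rw [h]; exact hb2.1⟩
    · exact ⟨c, hc, hci.1⟩
  have hU'_out : ∀ i, U' i → ∃ a, U' a ∧ (i, a) ∈ E := by
    intro i hi
    rcases Relation.ReflTransGen.cases_head hi with h | ⟨c, hc, hcw⟩
    · obtain ⟨b, hb1, hb2⟩ := Relation.TransGen.head'_iff.mp hw'
      exact ⟨b, hb2, by rw [h]; exact hb1.1⟩
    · exact ⟨c, hcw, hc.1⟩
  set dout : V → ℕ := fun i => (Finset.univ.filter (fun j => U' j ∧ (i, j) ∈ E)).card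
    with hdout
  set din : V → ℕ := fun j => (Finset.univ.filter (fun i => U i ∧ (i, j) ∈ E)).card
    with hdin
  set A : Matrix V V ℝ := Matrix.of (fun i j =>
    if (i,j) ∈ E then
      (if U' i ∧ U' j then ((dout i : ℝ))⁻¹ else if U i ∧ U j then ((din j : ℝ))⁻¹ else 1)
    else 0) with hA
  have h0 : ∀ i j, s i → ¬ s j → A i j = 0 := by
    intro i j hi hj
    rw [hA]; simp only [Matrix.of_apply]
    rw [if_neg (fun hij => hj (hclosed i j hi hij))]
  set x : V → ℝ := fun i => if U' i then 1 else 0 with hxdef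
  set y : V → ℝ := fun i => if U i then 1 else 0 with hydef
  have hxU : ∀ i, x i ≠ 0 → U' i := by
    intro i hi
    by_contra h
    exact hi (by rw [hxdef]; simp [h])
  have hyU : ∀ i, y i ≠ 0 → U i := by
    intro i hi
    by_contra h
    exact hi (by rw [hydef]; simp [h])
  have hAx : A *ᵥ x = x := by
    funext i
    have e1 : (A *ᵥ x) i = ∑ j, A i j * x j := by
      simp [Matrix.mulVec, dotProduct]
    by_cases hi : U' i
    · have hterm : ∀ j, A i j * x j =
          if U' j ∧ (i, j) ∈ E then ((dout i : ℝ))⁻¹ else 0 := by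
        intro j
        by_cases hj : U' j
        · by_cases hij : (i, j) ∈ E
          · rw [hA]; simp only [Matrix.of_apply]
            rw [if_pos hij, if_pos ⟨hi, hj⟩, if_pos ⟨hj, hij⟩, hxdef]
            simp [hj]
          · rw [hA]; simp only [Matrix.of_apply]
            rw [if_neg hij, if_neg (fun hh : U' j ∧ (i,j) ∈ E => hij hh.2), zero_mul]
        · rw [hxdef, if_neg (fun hh : U' j ∧ (i,j) ∈ E => hj hh.1)]
          simp [hj]
      have hcardeq : (Finset.univ.filter (fun j => U' j ∧ (i, j) ∈ E)).card = dout i := by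
        rw [hdout]
      have hpos : dout i ≠ 0 := by
        obtain ⟨a, ha1, ha2⟩ := hU'_out i hi
        rw [hdout]
        exact Finset.card_ne_zero_of_mem (Finset.mem_filter.mpr ⟨Finset.mem_univ a, ha1, ha2⟩)
      rw [e1, Finset.sum_congr rfl (fun j _ => hterm j), ← Finset.sum_filter,
        Finset.sum_const, hcardeq, nsmul_eq_mul,
        mul_inv_cancel₀ (Nat.cast_ne_zero.mpr hpos), hxdef]
      simp [hi]
    · have hterm : ∀ j, A i j * x j = 0 := by
        intro j
        by_cases hj : U' j
        · by_cases hij : (i, j) ∈ E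
          · exfalso
            by_cases hsi : s i
            · exact hU's j hj (hclosed i j hsi hij)
            · exact hi (Relation.ReflTransGen.head ⟨hij, hsi, hU's j hj⟩ hj)
          · rw [hA]; simp only [Matrix.of_apply]
            rw [if_neg hij, zero_mul]
        · rw [hxdef]; simp [hj]
      rw [e1, Finset.sum_eq_zero (fun j _ => hterm j), hxdef]
      simp [hi]
  have hyA : y ᵥ* A = y := by
    funext j
    have e1 : (y ᵥ* A) j = ∑ i, y i * A i j := by
      simp [Matrix.vecMul, dotProduct]
    by_cases hj : U j
    · have hterm : ∀ i, y i * A i j =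
          if U i ∧ (i, j) ∈ E then ((din j : ℝ))⁻¹ else 0 := by
        intro i
        by_cases hi : U i
        · by_cases hij : (i, j) ∈ E
          · rw [hA]; simp only [Matrix.of_apply]
            have hni : ¬ (U' i ∧ U' j) := fun hh => hU's i hh.1 (hUs i hi)
            rw [if_pos hij, if_neg hni, if_pos ⟨hi, hj⟩, if_pos ⟨hi, hij⟩, hydef]
            simp [hi]
          · rw [hA]; simp only [Matrix.of_apply]
            rw [if_neg hij, if_neg (fun hh : U i ∧ (i,j) ∈ E => hij hh.2), mul_zero]
        · rw [hydef, if_neg (fun hh : U i ∧ (i,j) ∈ E => hi hh.1)]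
          simp [hi]
      have hcardeq : (Finset.univ.filter (fun i => U i ∧ (i, j) ∈ E)).card = din j := by
        rw [hdin]
      have hpos : din j ≠ 0 := by
        obtain ⟨a, ha1, ha2⟩ := hU_in j hj
        rw [hdin]
        exact Finset.card_ne_zero_of_mem (Finset.mem_filter.mpr ⟨Finset.mem_univ a, ha1, ha2⟩)
      rw [e1, Finset.sum_congr rfl (fun i _ => hterm i), ← Finset.sum_filter,
        Finset.sum_const, hcardeq, nsmul_eq_mul,
        mul_inv_cancel₀ (Nat.cast_ne_zero.mpr hpos), hydef]
      simp [hj]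
    · have hterm : ∀ i, y i * A i j = 0 := by
        intro i
        by_cases hi : U i
        · by_cases hij : (i, j) ∈ E
          · exfalso
            exact hj (Relation.ReflTransGen.tail hi ⟨hij, hUs i hi, hclosed i j (hUs i hi) hij⟩)
          · rw [hA]; simp only [Matrix.of_apply]
            rw [if_neg hij, mul_zero]
        · rw [hydef]; simp [hi]
      rw [e1, Finset.sum_eq_zero (fun i _ => hterm i), hydef]
      simp [hj]
  have hmem : ∀ i j, A i j ≠ 0 ↔ (i, j) ∈ E := by
    intro i j
    constructor
    · intro h
      by_contra hij
      exact h (by rw [hA]; simp only [Matrix.of_apply]; rw [if_neg hij])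
    · intro hij
      rw [hA]; simp only [Matrix.of_apply]
      rw [if_pos hij]
      split_ifs with h1 h2
      · have hpos : dout i ≠ 0 := by
          rw [hdout]
          exact Finset.card_ne_zero_of_mem
            (Finset.mem_filter.mpr ⟨Finset.mem_univ j, h1.2, hij⟩)
        exact inv_ne_zero (Nat.cast_ne_zero.mpr hpos)
      · have hpos : din j ≠ 0 := by
          rw [hdin]
          exact Finset.card_ne_zero_of_mem
            (Finset.mem_filter.mpr ⟨Finset.mem_univ i, h2.1, hij⟩)
        exact inv_ne_zero (Nat.cast_ne_zero.mpr hpos)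
      · exact one_ne_zero
  have hxne : x ≠ 0 := by
    intro h
    have := congrFun h w'
    rw [hxdef] at this
    simp [hU'w'] at this
  have hyne : y ≠ 0 := by
    intro h
    have := congrFun h w
    rw [hydef] at this
    simp [hUw] at this
  exact ⟨A, hmem, witness_outer A s h0 1 x y hxne hyne
    (fun i hxi => hU's i (hxU i hxi)) (fun i hyi => hUs i (hyU i hyi))
    (by rw [hAx, one_smul]) (by rw [hyA, one_smul])⟩

end NSSPAux

/-- a digraph on `n ≥ 2` vertices that is not strongly connected
(there is no directed walk from `u` to `v`) does not require the nSSP. -/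
theorem not_strongly_connected_not_require_nSSP {n : ℕ} (hn : 2 ≤ n)
    (E : Set (Fin n × Fin n)) (u v : Fin n)
    (hwalk : ¬ Relation.ReflTransGen (fun a b : Fin n => (a, b) ∈ E) u v) :
    ∃ A : Matrix (Fin n) (Fin n) ℝ, MemPattern E A ∧ ¬ HasNSSP A := by
  classical
  set s : Fin n → Prop :=
    fun w => Relation.ReflTransGen (fun a b : Fin n => (a, b) ∈ E) u w with hs
  have hsu : s u := Relation.ReflTransGen.refl
  have hsv : ¬ s v := hwalk
  have hclosed : ∀ i j, s i → (i, j) ∈ E → s j := fun i j hi hij =>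
    Relation.ReflTransGen.tail hi hij
  by_cases hcT : ∃ w, Relation.TransGen (fun a b => (a, b) ∈ E ∧ ¬ s a ∧ ¬ s b) w w
  · by_cases hcS : ∃ w, Relation.TransGen (fun a b => (a, b) ∈ E ∧ s a ∧ s b) w w
    · obtain ⟨A, h1, h2⟩ := case_both_cycles E s hclosed hcS hcT
      exact ⟨A, h1, h2⟩
    · -- the source side is acyclic: apply the triangular construction to the transpose
      set A : Matrix (Fin n) (Fin n) ℝ :=
        Matrix.of (fun i j => if (i, j) ∈ E then (1 : ℝ) else 0) with hA
      have hmem : MemPattern E A := by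
        intro i j
        rw [hA]; simp only [Matrix.of_apply]
        by_cases h : (i, j) ∈ E <;> simp [h]
      have h0 : ∀ i j, s i → ¬ s j → A i j = 0 := by
        intro i j hi hj
        rw [hA]; simp only [Matrix.of_apply]
        rw [if_neg (fun hij => hj (hclosed i j hi hij))]
      have h0' : ∀ i j, (¬ s i) → ¬ ¬ s j → Aᵀ i j = 0 := by
        intro i j hi hj
        rw [Matrix.transpose_apply]
        exact h0 j i (not_not.mp hj) hi
      have hac' : ∀ w, ¬ Relation.TransGen
          (fun a b => Aᵀ a b ≠ 0 ∧ ¬ ¬ s a ∧ ¬ ¬ s b) w w := by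
        intro w hw
        apply hcS
        refine ⟨w, Relation.transGen_swap.mp (Relation.TransGen.mono ?_ _ _ hw)⟩
        intro a b hab
        exact ⟨(hmem b a).mp hab.1, not_not.mp hab.2.2, not_not.mp hab.2.1⟩
      have hnT : ¬ HasNSSP Aᵀ :=
        witness_triangular Aᵀ (fun i => ¬ s i) h0' hac' u (not_not_intro hsu)
      refine ⟨A, hmem, fun hh => hnT ?_⟩
      exact hasNSSP_of_transpose Aᵀ (by rw [Matrix.transpose_transpose]; exact hh)
  · -- the target side is acyclic: triangular construction directly
    set A : Matrix (Fin n) (Fin n) ℝ :=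
      Matrix.of (fun i j => if (i, j) ∈ E then (1 : ℝ) else 0) with hA
    have hmem : MemPattern E A := by
      intro i j
      rw [hA]; simp only [Matrix.of_apply]
      by_cases h : (i, j) ∈ E <;> simp [h]
    have h0 : ∀ i j, s i → ¬ s j → A i j = 0 := by
      intro i j hi hj
      rw [hA]; simp only [Matrix.of_apply]
      rw [if_neg (fun hij => hj (hclosed i j hi hij))]
    have hac : ∀ w, ¬ Relation.TransGen (fun a b => A a b ≠ 0 ∧ ¬ s a ∧ ¬ s b) w w := by
      intro w hw
      exact hcT ⟨w, Relation.TransGen.mono (fun a b hab => ⟨(hmem a b).mp hab.1, hab.2.1, hab.2.2⟩) _ _ hw⟩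
    exact ⟨A, hmem, witness_triangular A s h0 hac v hsv⟩
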